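/- In the complete multipartite graph K_{2,2,1,1,1,1} with parts {a,b}, {x,y}, {1}, {2}, {3}, {4}, there are exactly 16 subgraphs isomorphic to H₈ of the canonical form: the top vertex is one of a, b, x, y, the middle vertices are the two non-adjacent partners from the other size-2 part together with one of 1,2,3,4, and the remaining four vertices are the bottom vertices. -/

import Mathlib

open SimpleGraph

/-- The graph `H₈`, obtained from `K₇` by a triangle-Y move: vertex `0` is the
top vertex (degree 3), vertices `1,2,3` are the mutually non-adjacent middle
vertices (degree 5, adjacent to the top), and `4,5,6,7` are the bottom vertices
(degree 6, adjacent to everything except the top). -/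
def H8 : SimpleGraph (Fin 8) where
  Adj u v := u ≠ v ∧
    ((![0, 1, 1, 1, 2, 2, 2, 2] u = (0 : Fin 3) ∧ ![0, 1, 1, 1, 2, 2, 2, 2] v = (1 : Fin 3)) ∨
     (![0, 1, 1, 1, 2, 2, 2, 2] u = (1 : Fin 3) ∧ ![0, 1, 1, 1, 2, 2, 2, 2] v = (0 : Fin 3)) ∨
     (![0, 1, 1, 1, 2, 2, 2, 2] u = (1 : Fin 3) ∧ ![0, 1, 1, 1, 2, 2, 2, 2] v = (2 : Fin 3)) ∨
     (![0, 1, 1, 1, 2, 2, 2, 2] u = (2 : Fin 3) ∧ ![0, 1, 1, 1, 2, 2, 2, 2] v = (1 : Fin 3)) ∨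
     (![0, 1, 1, 1, 2, 2, 2, 2] u = (2 : Fin 3) ∧ ![0, 1, 1, 1, 2, 2, 2, 2] v = (2 : Fin 3)))
  symm := ⟨by intro u v h; exact ⟨h.1.symm, by tauto⟩⟩
  loopless := ⟨by intro v h; exact h.1 rfl⟩

/-- The vertex type of `K_{2,2,1,1,1,1}` with parts `{a,b}, {x,y}, {1},…,{4}`. -/
abbrev V221111 := Σ i, ![Fin 2, Fin 2, Fin 1, Fin 1, Fin 1, Fin 1] i

/-- The `a`-th vertex of the `i`-th size-2 part. -/
def vtx (i a : Fin 2) : V221111 := if i = 0 then ⟨0, a⟩ else ⟨1, a⟩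

/-- The vertex of the `j`-th singleton part. -/
def sing : Fin 4 → V221111 :=
  ![⟨2, (0 : Fin 1)⟩, ⟨3, (0 : Fin 1)⟩, ⟨4, (0 : Fin 1)⟩, ⟨5, (0 : Fin 1)⟩]

/-- In `K_{2,2,1,1,1,1}` there are exactly `4 · 4 = 16` canonical subgraphs
isomorphic to `H₈`: the top vertex is any of the 4 vertices of the size-2
parts, the middle vertices are the two vertices of the other size-2 part
together with one of the 4 singleton vertices, and the remaining four vertices
are the bottom vertices.  Distinct choices give distinct subgraphs. -/

instance decEqFiber (i : Fin 6) :
    DecidableEq (![Fin 2, Fin 2, Fin 1, Fin 1, Fin 1, Fin 1] i) :=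
  match i with
  | 0 => inferInstanceAs (DecidableEq (Fin 2))
  | 1 => inferInstanceAs (DecidableEq (Fin 2))
  | 2 => inferInstanceAs (DecidableEq (Fin 1))
  | 3 => inferInstanceAs (DecidableEq (Fin 1))
  | 4 => inferInstanceAs (DecidableEq (Fin 1))
  | 5 => inferInstanceAs (DecidableEq (Fin 1))

instance : DecidableRel H8.Adj := fun u v => by
  change Decidable (u ≠ v ∧ _); infer_instance

lemma vtx_ne_sing : ∀ i a j, vtx i a ≠ sing j := by decide

lemma sing_inj : Function.Injective sing := by decide

lemma vtx_inj : ∀ i a i' a', vtx i a = vtx i' a' → i = i' ∧ a = a' := by decide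

/-- The embedding of `H₈` used in the main theorem. -/
def g (i a : Fin 2) (j : Fin 4) : Fin 8 → V221111 :=
  ![vtx i a, vtx (1 - i) 0, vtx (1 - i) 1, sing j,
    vtx i (a + 1), sing (j + 1), sing (j + 2), sing (j + 3)]

lemma g_hom (i a : Fin 2) (j : Fin 4) :
    (∀ u v, H8.Adj u v →
      (completeMultipartiteGraph ![Fin 2, Fin 2, Fin 1, Fin 1, Fin 1, Fin 1]).Adj
        (g i a j u) (g i a j v)) ∧ Function.Injective (g i a j) := by
  fin_cases i <;> fin_cases a <;> fin_cases j <;> decide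

theorem stmt_14 :
    let G := completeMultipartiteGraph ![Fin 2, Fin 2, Fin 1, Fin 1, Fin 1, Fin 1]
    Fintype.card ((Fin 2 × Fin 2) × Fin 4) = 16 ∧
    Function.Injective (fun p : (Fin 2 × Fin 2) × Fin 4 =>
      (vtx p.1.1 p.1.2,
        ({vtx (1 - p.1.1) 0, vtx (1 - p.1.1) 1, sing p.2} : Set V221111))) ∧
    (∀ (i a : Fin 2) (j : Fin 4),
      ∃ f : H8 →g G, Function.Injective f ∧
        f 0 = vtx i a ∧
        ({f 1, f 2, f 3} : Set V221111) =
          {vtx (1 - i) 0, vtx (1 - i) 1, sing j}) := by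
  intro G
  refine ⟨rfl, ?_, ?_⟩
  · rintro ⟨⟨i, a⟩, j⟩ ⟨⟨i', a'⟩, j'⟩ h
    simp only [Prod.mk.injEq] at h
    obtain ⟨h1, h2⟩ := h
    obtain ⟨hi, ha⟩ := vtx_inj _ _ _ _ h1
    subst hi; subst ha
    have hmem : sing j ∈ ({vtx (1 - i) 0, vtx (1 - i) 1, sing j'} : Set V221111) := by
      rw [← h2]; simp
    rcases hmem with h | h | h
    · exact absurd h.symm (vtx_ne_sing _ _ _)
    · exact absurd h.symm (vtx_ne_sing _ _ _)
    · rw [sing_inj h]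
  · intro i a j
    obtain ⟨hhom, hinj⟩ := g_hom i a j
    exact ⟨⟨g i a j, fun h => hhom _ _ h⟩, hinj, rfl, rfl⟩
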